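/- For every p ∈ (1,∞) there exists a positive constant C₂ depending only on p such that for every dimension d ∈ ℕ, all vectors y, z ∈ ℝ^d and every real a ≥ 0, one has ((a² + |y|²)^{(p−2)/2} y − (a² + |z|²)^{(p−2)/2} z) · (y − z) ≥ C₂ (a + |y| + |z|)^{p−2} |y − z|², where · is the Euclidean inner product. -/

import Mathlib

open scoped RealInnerProductSpace


private lemma sq_rpow_half (x e : ℝ) (hx : 0 ≤ x) : ((x ^ 2 : ℝ)) ^ (e / 2) = x ^ e := by
  rw [← Real.rpow_natCast x 2, ← Real.rpow_mul hx]
  congr 1; ring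

/-- core lower bound: `min (p-1) 2^{-3(p-2)/2} * (a+s+t)^{p-2} ≤ (a²+s²)^{(p-2)/2}` when `t ≤ s`. -/
private lemma lowbound (p a s t : ℝ) (hp : 1 < p) (ha : 0 ≤ a) (ht : 0 ≤ t) (hts : t ≤ s)
    (hpos : 0 < a + s) :
    min (p - 1) ((2:ℝ) ^ (-(3 * (p - 2)) / 2)) * (a + s + t) ^ (p - 2)
      ≤ (a ^ 2 + s ^ 2) ^ ((p - 2) / 2) := by
  have hs : 0 ≤ s := le_trans ht hts
  have hA0 : (0:ℝ) < a ^ 2 + s ^ 2 := by nlinarith [sq_nonneg (a - s), mul_pos hpos hpos]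
  have hK0 : (0:ℝ) ≤ (a + s + t) ^ (p - 2) := Real.rpow_nonneg (by linarith) _
  rcases le_or_gt p 2 with hp2 | hp2
  · -- p ≤ 2 : min ≤ p-1 ≤ 1, K ≤ (a+s)^{p-2} ≤ A
    have e1 : (a + s + t) ^ (p - 2) ≤ (a + s) ^ (p - 2) :=
      Real.rpow_le_rpow_of_nonpos hpos (by linarith) (by linarith)
    have e2 : ((a + s) ^ 2 : ℝ) ^ ((p - 2) / 2) ≤ (a ^ 2 + s ^ 2) ^ ((p - 2) / 2) :=
      Real.rpow_le_rpow_of_nonpos hA0 (by nlinarith) (by linarith)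
    rw [sq_rpow_half _ _ (by linarith)] at e2
    have hm : min (p - 1) ((2:ℝ) ^ (-(3 * (p - 2)) / 2)) ≤ 1 := le_trans (min_le_left _ _) (by linarith)
    have hm0 : (0:ℝ) ≤ min (p - 1) ((2:ℝ) ^ (-(3 * (p - 2)) / 2)) :=
      le_min (by linarith) (Real.rpow_nonneg (by norm_num) _)
    nlinarith [mul_le_mul_of_nonneg_right hm hK0]
  · -- p > 2 : K ≤ 2^{3(p-2)/2} A
    have e1 : (a + s + t) ^ (p - 2) ≤ (2 * (a + s)) ^ (p - 2) :=
      Real.rpow_le_rpow (by linarith) (by linarith) (by linarith)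
    have e2 : ((2:ℝ) * (a + s)) ^ (p - 2) = 2 ^ (p - 2) * (a + s) ^ (p - 2) :=
      Real.mul_rpow (by norm_num) (by linarith)
    have e3 : ((a + s) : ℝ) ^ (p - 2) = ((a + s) ^ 2 : ℝ) ^ ((p - 2) / 2) :=
      (sq_rpow_half _ _ (by linarith)).symm
    have e4 : ((a + s) ^ 2 : ℝ) ^ ((p - 2) / 2) ≤ ((2:ℝ) * (a ^ 2 + s ^ 2)) ^ ((p - 2) / 2) :=
      Real.rpow_le_rpow (by positivity) (by nlinarith [sq_nonneg (a - s)]) (by linarith)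
    have e5 : ((2:ℝ) * (a ^ 2 + s ^ 2)) ^ ((p - 2) / 2)
        = 2 ^ ((p - 2) / 2) * (a ^ 2 + s ^ 2) ^ ((p - 2) / 2) :=
      Real.mul_rpow (by norm_num) (by positivity)
    have key : (a + s + t) ^ (p - 2) ≤ 2 ^ ((3 * (p - 2)) / 2) * (a ^ 2 + s ^ 2) ^ ((p - 2) / 2) := by
      have h2 : (2:ℝ) ^ (p - 2) * (2 ^ ((p - 2) / 2) * (a ^ 2 + s ^ 2) ^ ((p - 2) / 2))
          = 2 ^ ((3 * (p - 2)) / 2) * (a ^ 2 + s ^ 2) ^ ((p - 2) / 2) := by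
        rw [← mul_assoc, ← Real.rpow_add (by norm_num : (0:ℝ) < 2)]
        congr 2; ring
      calc (a + s + t) ^ (p - 2) ≤ 2 ^ (p - 2) * (a + s) ^ (p - 2) := by rw [← e2]; exact e1
        _ ≤ 2 ^ (p - 2) * (2 ^ ((p - 2) / 2) * (a ^ 2 + s ^ 2) ^ ((p - 2) / 2)) := by
            rw [e3] at *
            have := le_trans e4 (le_of_eq e5)
            exact mul_le_mul_of_nonneg_left this (Real.rpow_nonneg (by norm_num) _)
        _ = _ := h2
    have hm : min (p - 1) ((2:ℝ) ^ (-(3 * (p - 2)) / 2)) ≤ (2:ℝ) ^ (-(3 * (p - 2)) / 2) :=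
      min_le_right _ _
    have h2pos : (0:ℝ) < (2:ℝ) ^ (-(3 * (p - 2)) / 2) := Real.rpow_pos_of_pos (by norm_num) _
    have : (2:ℝ) ^ (-(3 * (p - 2)) / 2) * ((a + s + t) ^ (p - 2))
        ≤ (2:ℝ) ^ (-(3 * (p - 2)) / 2) * (2 ^ ((3 * (p - 2)) / 2) * (a ^ 2 + s ^ 2) ^ ((p - 2) / 2)) :=
      mul_le_mul_of_nonneg_left key h2pos.le
    have hcancel : (2:ℝ) ^ (-(3 * (p - 2)) / 2) * (2:ℝ) ^ ((3 * (p - 2)) / 2) = 1 := by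
      rw [← Real.rpow_add (by norm_num : (0:ℝ) < 2)]
      rw [show -(3 * (p - 2)) / 2 + 3 * (p - 2) / 2 = 0 by ring, Real.rpow_zero]
    nlinarith [mul_le_mul_of_nonneg_right hm hK0, Real.rpow_nonneg (show (0:ℝ) ≤ a^2+s^2 by positivity) ((p-2)/2)]



private lemma mvt_case (p a s t : ℝ) (hp1 : 1 < p) (hp2 : p < 2) (ha : 0 ≤ a)
    (ht : 0 ≤ t) (hts : t < s) (hpos : 0 < a ^ 2 + t ^ 2) :
    (p - 1) * (a + s + t) ^ (p - 2) * (s - t)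
      ≤ (a ^ 2 + s ^ 2) ^ ((p - 2) / 2) * s - (a ^ 2 + t ^ 2) ^ ((p - 2) / 2) * t := by
  set q : ℝ := (p - 2) / 2 with hq
  set f : ℝ → ℝ := fun x => (a ^ 2 + x ^ 2) ^ q * x with hf
  set g : ℝ → ℝ := fun x => (q * (a ^ 2 + x ^ 2) ^ (q - 1) * (2 * x)) * x + (a ^ 2 + x ^ 2) ^ q
    with hg
  have hbase : ∀ x : ℝ, t ≤ x → 0 < a ^ 2 + x ^ 2 := by
    intro x hx
    nlinarith
  have hderiv : ∀ x : ℝ, t ≤ x → HasDerivAt f (g x) x := by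
    intro x hx
    have h1 : HasDerivAt (fun x : ℝ => a ^ 2 + x ^ 2) (2 * x) x := by
      simpa using (hasDerivAt_pow 2 x).const_add (a ^ 2)
    have h2 : HasDerivAt (fun x : ℝ => (a ^ 2 + x ^ 2) ^ q)
        ((2 * x) * q * (a ^ 2 + x ^ 2) ^ (q - 1)) x :=
      h1.rpow_const (Or.inl (hbase x hx).ne')
    have h3 := h2.mul (hasDerivAt_id x)
    have h4 : HasDerivAt f (2 * x * q * (a ^ 2 + x ^ 2) ^ (q - 1) * x + (a ^ 2 + x ^ 2) ^ q) x := by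
      simp at h3; exact h3
    have he : g x = 2 * x * q * (a ^ 2 + x ^ 2) ^ (q - 1) * x + (a ^ 2 + x ^ 2) ^ q := by
      simp only [hg]; ring
    rw [he]; exact h4
  obtain ⟨ξ, hξ, hslope⟩ := exists_hasDerivAt_eq_slope f g hts
    (fun x hx => (hderiv x hx.1).continuousAt.continuousWithinAt)
    (fun x hx => hderiv x hx.1.le)
  have hξt : t < ξ := hξ.1
  have hξs : ξ < s := hξ.2
  have hξ0 : 0 < ξ := lt_of_le_of_lt ht hξt
  have hX : 0 < a ^ 2 + ξ ^ 2 := by positivity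
  -- g ξ ≥ (p-1) * (a+s+t)^(p-2)
  have hXq : (a ^ 2 + ξ ^ 2) ^ q = (a ^ 2 + ξ ^ 2) ^ (q - 1) * (a ^ 2 + ξ ^ 2) := by
    rw [← Real.rpow_add_one hX.ne' (q - 1)]
    congr 1; ring
  have hgξ : g ξ = (a ^ 2 + ξ ^ 2) ^ (q - 1) * (a ^ 2 + (p - 1) * ξ ^ 2) := by
    simp only [hg]
    rw [hXq, hq]
    ring
  have hXq1 : (0:ℝ) < (a ^ 2 + ξ ^ 2) ^ (q - 1) := Real.rpow_pos_of_pos hX _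
  have step1 : (p - 1) * (a ^ 2 + ξ ^ 2) ^ q ≤ g ξ := by
    rw [hgξ, hXq]
    have : (p - 1) * (a ^ 2 + ξ ^ 2) ≤ a ^ 2 + (p - 1) * ξ ^ 2 := by nlinarith
    nlinarith
  have step2 : (a + ξ) ^ (p - 2) ≤ (a ^ 2 + ξ ^ 2) ^ q := by
    rw [← sq_rpow_half (a + ξ) (p - 2) (by linarith), hq]
    exact Real.rpow_le_rpow_of_nonpos hX (by nlinarith) (by linarith)
  have step3 : (a + s + t) ^ (p - 2) ≤ (a + ξ) ^ (p - 2) :=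
    Real.rpow_le_rpow_of_nonpos (by linarith) (by linarith) (by linarith)
  have hgb : (p - 1) * (a + s + t) ^ (p - 2) ≤ g ξ := by
    calc (p - 1) * (a + s + t) ^ (p - 2) ≤ (p - 1) * (a ^ 2 + ξ ^ 2) ^ q := by
          have := le_trans step3 step2
          nlinarith
      _ ≤ g ξ := step1
  have hfs : f s - f t = g ξ * (s - t) := by
    rw [hslope, div_mul_cancel₀ _ (sub_ne_zero.2 hts.ne')]
  have : (p - 1) * (a + s + t) ^ (p - 2) * (s - t) ≤ g ξ * (s - t) := by
    have hst : (0:ℝ) < s - t := by linarith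
    nlinarith
  rw [← hfs] at this
  simpa [hf] using this


private lemma oneD_le (p a s t : ℝ) (hp : 1 < p) (ha : 0 ≤ a) (ht : 0 ≤ t) (hts : t ≤ s) :
    min (p - 1) ((2:ℝ) ^ (-(3 * (p - 2)) / 2)) / 2 * (a + s + t) ^ (p - 2) * (s - t)
      ≤ (a ^ 2 + s ^ 2) ^ ((p - 2) / 2) * s - (a ^ 2 + t ^ 2) ^ ((p - 2) / 2) * t := by
  set M : ℝ := min (p - 1) ((2:ℝ) ^ (-(3 * (p - 2)) / 2)) with hMdef
  have hM0 : 0 < M := lt_min (by linarith) (Real.rpow_pos_of_pos (by norm_num) _)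
  have hM1 : M ≤ p - 1 := min_le_left _ _
  rcases eq_or_lt_of_le hts with rfl | hlt
  · simp
  have hs0 : 0 < s := lt_of_le_of_lt ht hlt
  have hK0 : (0:ℝ) ≤ (a + s + t) ^ (p - 2) := Real.rpow_nonneg (by linarith) _
  rcases lt_or_ge p 2 with hp2 | hp2
  · -- 1 < p < 2
    rcases eq_or_lt_of_le (by positivity : (0:ℝ) ≤ a ^ 2 + t ^ 2) with hz | hpos
    · -- a = 0 and t = 0
      have ha0 : a = 0 := by nlinarith [sq_nonneg a, sq_nonneg t]
      have ht0 : t = 0 := by nlinarith [sq_nonneg a, sq_nonneg t]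
      subst ha0; subst ht0
      have e1 : ((0:ℝ) ^ 2 + s ^ 2) ^ ((p - 2) / 2) = s ^ (p - 2) := by
        rw [show (0:ℝ) ^ 2 + s ^ 2 = s ^ 2 by ring, sq_rpow_half _ _ hs0.le]
      have e2 : ((0:ℝ) ^ 2 + (0:ℝ) ^ 2) ^ ((p - 2) / 2) * 0 = 0 := by ring
      rw [e1, e2, show (0:ℝ) + s + 0 = s by ring]
      have : M / 2 ≤ 1 := by linarith
      nlinarith [Real.rpow_nonneg hs0.le (p - 2), mul_nonneg (Real.rpow_nonneg hs0.le (p-2)) hs0.le]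
    · have hmvt := mvt_case p a s t hp hp2 ha ht hlt hpos
      have h1 : M / 2 * (a + s + t) ^ (p - 2) * (s - t)
          ≤ (p - 1) * (a + s + t) ^ (p - 2) * (s - t) := by
        have : (0:ℝ) ≤ (a + s + t) ^ (p - 2) * (s - t) := by
          apply mul_nonneg hK0; linarith
        nlinarith
      linarith
  · -- p ≥ 2
    have hBA : (a ^ 2 + t ^ 2) ^ ((p - 2) / 2) ≤ (a ^ 2 + s ^ 2) ^ ((p - 2) / 2) :=
      Real.rpow_le_rpow (by positivity) (by nlinarith) (by linarith)
    have hA : M * (a + s + t) ^ (p - 2) ≤ (a ^ 2 + s ^ 2) ^ ((p - 2) / 2) :=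
      lowbound p a s t hp ha ht hts (by linarith)
    have hB0 : (0:ℝ) ≤ (a ^ 2 + t ^ 2) ^ ((p - 2) / 2) := Real.rpow_nonneg (by positivity) _
    nlinarith [mul_le_mul_of_nonneg_right hBA ht, mul_le_mul_of_nonneg_right hA (by linarith : (0:ℝ) ≤ s - t)]

private lemma oneD (p a s t : ℝ) (hp : 1 < p) (ha : 0 ≤ a) (hs : 0 ≤ s) (ht : 0 ≤ t) :
    min (p - 1) ((2:ℝ) ^ (-(3 * (p - 2)) / 2)) / 2 * (a + s + t) ^ (p - 2) * (s - t) ^ 2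
      ≤ ((a ^ 2 + s ^ 2) ^ ((p - 2) / 2) * s - (a ^ 2 + t ^ 2) ^ ((p - 2) / 2) * t) * (s - t) := by
  rcases le_total t s with hts | hst
  · have h := oneD_le p a s t hp ha ht hts
    nlinarith [mul_le_mul_of_nonneg_right h (by linarith : (0:ℝ) ≤ s - t)]
  · have h := oneD_le p a t s hp ha hs hst
    rw [show a + t + s = a + s + t by ring] at h
    nlinarith [mul_le_mul_of_nonneg_right h (by linarith : (0:ℝ) ≤ t - s)]

private lemma slope_bound (p a s t : ℝ) (hp : 1 < p) (ha : 0 ≤ a) (hs : 0 ≤ s) (ht : 0 ≤ t) :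
    min (p - 1) ((2:ℝ) ^ (-(3 * (p - 2)) / 2)) * (a + s + t) ^ (p - 2)
      ≤ (a ^ 2 + s ^ 2) ^ ((p - 2) / 2) + (a ^ 2 + t ^ 2) ^ ((p - 2) / 2) := by
  have hM0 : 0 < min (p - 1) ((2:ℝ) ^ (-(3 * (p - 2)) / 2)) :=
    lt_min (by linarith) (Real.rpow_pos_of_pos (by norm_num) _)
  rcases eq_or_lt_of_le (by linarith : (0:ℝ) ≤ a + s + t) with hz | hpos
  · -- a = s = t = 0
    have ha0 : a = 0 := by linarith
    have hs0 : s = 0 := by linarith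
    have ht0 : t = 0 := by linarith
    subst ha0; subst hs0; subst ht0
    rcases eq_or_ne p 2 with rfl | hp2
    · norm_num
    · rw [show (0:ℝ) + 0 + 0 = 0 by ring, Real.zero_rpow (by intro h; apply hp2; linarith)]
      have : (0:ℝ) ≤ ((0:ℝ) ^ 2 + (0:ℝ) ^ 2) ^ ((p - 2) / 2) := Real.rpow_nonneg (by norm_num) _
      nlinarith
  · rcases le_total t s with hts | hst
    · have h := lowbound p a s t hp ha ht hts (by nlinarith)
      have : (0:ℝ) ≤ (a ^ 2 + t ^ 2) ^ ((p - 2) / 2) := Real.rpow_nonneg (by positivity) _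
      linarith
    · have h := lowbound p a t s hp ha hs hst (by nlinarith)
      rw [show a + t + s = a + s + t by ring] at h
      have : (0:ℝ) ≤ (a ^ 2 + s ^ 2) ^ ((p - 2) / 2) := Real.rpow_nonneg (by positivity) _
      linarith

/-- Lemma 2.1 (second inequality): for every `p ∈ (1,∞)` there is a positive constant `C₂`
depending only on `p` such that for all dimensions `d`, all `y z : ℝ^d` and all `a ≥ 0`,
`((a² + |y|²)^((p-2)/2) y − (a² + |z|²)^((p-2)/2) z) · (y − z) ≥ C₂ (a + |y| + |z|)^(p-2) |y − z|²`. -/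
theorem stmt_1 :
    ∀ p : ℝ, 1 < p →
      ∃ C₂ : ℝ, 0 < C₂ ∧
        ∀ (d : ℕ) (y z : EuclideanSpace ℝ (Fin d)) (a : ℝ), 0 ≤ a →
          C₂ * (a + ‖y‖ + ‖z‖) ^ (p - 2) * ‖y - z‖ ^ 2 ≤
            ⟪((a ^ 2 + ‖y‖ ^ 2) ^ ((p - 2) / 2)) • y -
                ((a ^ 2 + ‖z‖ ^ 2) ^ ((p - 2) / 2)) • z, y - z⟫ := by
  intro p hp
  refine ⟨min (p - 1) ((2:ℝ) ^ (-(3 * (p - 2)) / 2)) / 2, by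
    have : 0 < min (p - 1) ((2:ℝ) ^ (-(3 * (p - 2)) / 2)) :=
      lt_min (by linarith) (Real.rpow_pos_of_pos (by norm_num) _)
    linarith, ?_⟩
  intro d y z a ha
  have hs : (0:ℝ) ≤ ‖y‖ := norm_nonneg y
  have ht : (0:ℝ) ≤ ‖z‖ := norm_nonneg z
  have hu : ⟪y, z⟫ ≤ ‖y‖ * ‖z‖ := real_inner_le_norm y z
  have hexp : ⟪((a ^ 2 + ‖y‖ ^ 2) ^ ((p - 2) / 2)) • y -
      ((a ^ 2 + ‖z‖ ^ 2) ^ ((p - 2) / 2)) • z, y - z⟫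
      = (a ^ 2 + ‖y‖ ^ 2) ^ ((p - 2) / 2) * ‖y‖ ^ 2
        + (a ^ 2 + ‖z‖ ^ 2) ^ ((p - 2) / 2) * ‖z‖ ^ 2
        - ((a ^ 2 + ‖y‖ ^ 2) ^ ((p - 2) / 2) + (a ^ 2 + ‖z‖ ^ 2) ^ ((p - 2) / 2)) * ⟪y, z⟫ := by
    simp only [inner_sub_left, inner_sub_right, real_inner_smul_left,
      real_inner_self_eq_norm_sq]
    rw [real_inner_comm z y]
    ring
  have hnorm : ‖y - z‖ ^ 2 = ‖y‖ ^ 2 - 2 * ⟪y, z⟫ + ‖z‖ ^ 2 := norm_sub_sq_real y z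
  rw [hexp, hnorm]
  have h1 := oneD p a ‖y‖ ‖z‖ hp ha hs ht
  have h2 := slope_bound p a ‖y‖ ‖z‖ hp ha hs ht
  nlinarith [mul_nonneg (sub_nonneg.2 h2) (sub_nonneg.2 hu)]
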